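/- For n ≥ 4, β ∈ T_n, and 1 ≤ i ≤ n−2, the functions f_n satisfy the skein relation f_n(β t_i t_{i+1} t_i) − f_n(β t_{i+1} t_i t_{i+1}) = (x² − 1)·(f_n(β t_i) − f_n(β t_{i+1})). -/

import Mathlib

open Matrix Polynomial
set_option maxHeartbeats 1000000
set_option linter.unusedSectionVars false
/-- Deformed Tits matrix `V_i` (generator index `i` is 1-based, `1 ≤ i ≤ m`):
the identity `m × m` matrix except column `i`, which has `-1` on the diagonal,
`y` in row `i-1` and `x` in row `i+1`. -/
def Vmat {R : Type*} [CommRing R] (x y : R) (m i : ℕ) : Matrix (Fin m) (Fin m) R :=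
  Matrix.of fun r c =>
    if (c : ℕ) + 1 = i then
      if (r : ℕ) + 1 = i then -1
      else if (r : ℕ) + 2 = i then y
      else if (r : ℕ) = i then x
      else 0
    else if r = c then 1 else 0

/-- Relators of the twin group with `m` generators (the twin group on `m+1` strands). -/
def twinRels (m : ℕ) : Set (FreeGroup (Fin m)) :=
  {r | (∃ i, r = FreeGroup.of i * FreeGroup.of i) ∨
       (∃ i j : Fin m, (i : ℕ) + 1 < (j : ℕ) ∧
          r = FreeGroup.of i * FreeGroup.of j * (FreeGroup.of i)⁻¹ * (FreeGroup.of j)⁻¹)}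

/-- The twin group `T_{m+1}` on `m+1` strands, with `m` generators `t_1, …, t_m`;
the generator `t_{i+1}` is `TwinGroup.of i` for `i : Fin m`. -/
def TwinGroup (m : ℕ) : Type := PresentedGroup (twinRels m)

instance (m : ℕ) : Group (TwinGroup m) :=
  inferInstanceAs (Group (PresentedGroup (twinRels m)))

/-- The generator `t_{i+1}` of the twin group. -/
def TwinGroup.of {m : ℕ} (i : Fin m) : TwinGroup m := PresentedGroup.of i

/-- The field `ℤ(x)` of rational functions over `ℤ`. -/
noncomputable abbrev Zx : Type := FractionRing (Polynomial ℤ)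

/-- The element `x` of `ℤ(x)`. -/
noncomputable def xx : Zx := algebraMap (Polynomial ℤ) Zx Polynomial.X

/-- `U_n(1/x)` as an element of `ℤ(x)`, `U_n` the `n`-th Chebyshev polynomial
of the second kind. -/
noncomputable def Ux (n : ℕ) : Zx := Polynomial.eval xx⁻¹ (Polynomial.Chebyshev.U Zx n)

section
variable {R : Type*} [CommRing R] {n : Type*} [DecidableEq n] [Fintype n]

lemma mul_updateColumn' (A B : Matrix n n R) (c : n) (u : n → R) :
    A * (B.updateCol c u) = (A * B).updateCol c (A.mulVec u) := by
  ext r c'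
  by_cases h : c' = c
  · subst h; simp [Matrix.mul_apply, Matrix.mulVec, dotProduct]
  · simp [Matrix.mul_apply, Matrix.updateCol_ne h, h]

lemma updateColumn_comm' (A : Matrix n n R) {c1 c2 : n} (h : c1 ≠ c2) (u v : n → R) :
    (A.updateCol c1 u).updateCol c2 v = (A.updateCol c2 v).updateCol c1 u := by
  ext r c
  by_cases h1 : c = c1 <;> by_cases h2 : c = c2 <;>
    simp_all [Matrix.updateCol_apply]

lemma updateColumn_idem' (A : Matrix n n R) (c : n) (u v : n → R) :
    (A.updateCol c u).updateCol c v = A.updateCol c v := by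
  ext r c'
  by_cases h : c' = c <;> simp_all [Matrix.updateCol_apply]

lemma updateColumn_one_mulVec (c : n) (u b : n → R) :
    ((1 : Matrix n n R).updateCol c u).mulVec b
      = b + b c • u - b c • (Pi.single c 1 : n → R) := by
  funext r
  simp only [Matrix.mulVec, dotProduct, Matrix.updateCol_apply,
    Matrix.one_apply, Pi.add_apply, Pi.sub_apply, Pi.smul_apply, smul_eq_mul,
    Pi.single_apply]
  have h1 : ∀ k : n, (if k = c then u r else if r = k then (1:R) else 0) * b k
      = (if k = c then u r * b k else 0)
        + ((if r = k then b k else 0) - (if k = c then (if r = k then b k else 0) else 0)) := by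
    intro k; split_ifs <;> ring
  rw [Finset.sum_congr rfl fun k _ => h1 k, Finset.sum_add_distrib,
    Finset.sum_sub_distrib, Finset.sum_ite_eq' Finset.univ c,
    Finset.sum_ite_eq Finset.univ r, Finset.sum_ite_eq' Finset.univ c]
  simp only [Finset.mem_univ, if_true]
  by_cases h : r = c <;> simp [h] <;> ring

lemma updateColumn_sub (X Y : Matrix n n R) (c : n) (u : n → R) :
    X.updateCol c u - Y = (X - Y).updateCol c (u - fun r => Y r c) := by
  ext r c'
  by_cases h : c' = c <;> simp_all [Matrix.updateCol_apply]

lemma det_skein (G : Matrix n n R) {c1 c2 : n} (h12 : c1 ≠ c2) (x : R)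
    (A1 A2 g1 g2 : n → R) (hg1 : g1 = fun r => G r c1) (hg2 : g2 = fun r => G r c2) :
    ((G.updateCol c1 (x^2•A1 + x•A2 - (x^2-1)•g1 - x•g2)).updateCol c2
        (x•A1 + A2 - x•g1)).det
    - ((G.updateCol c1 (A1 + x•A2 - x•g2)).updateCol c2
        (x•A1 + x^2•A2 - x•g1 - (x^2-1)•g2)).det
    = (x^2-1) * ((G.updateCol c1 A1).det - (G.updateCol c2 A2).det) := by
  set D : (n → R) → (n → R) → R :=
    fun a b => ((G.updateCol c1 a).updateCol c2 b).det with hD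
  have hadd_r : ∀ a b b', D a (b + b') = D a b + D a b' := fun a b b' =>
    Matrix.det_updateCol_add _ _ _ _
  have hsmul_r : ∀ a (s : R) b, D a (s • b) = s * D a b := fun a s b =>
    Matrix.det_updateCol_smul _ _ _ _
  have hswapD : ∀ a b, D a b = ((G.updateCol c2 b).updateCol c1 a).det := by
    intro a b
    show ((G.updateCol c1 a).updateCol c2 b).det = _
    rw [updateColumn_comm' _ h12]
  have hadd_l : ∀ a a' b, D (a + a') b = D a b + D a' b := by
    intro a a' b
    rw [hswapD, hswapD, hswapD, Matrix.det_updateCol_add]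
  have hsmul_l : ∀ (s : R) a b, D (s • a) b = s * D a b := by
    intro s a b
    rw [hswapD, hswapD, Matrix.det_updateCol_smul]
  have hzero : ∀ a, D a a = 0 := by
    intro a
    apply Matrix.det_zero_of_column_eq h12
    intro k
    rw [Matrix.updateCol_ne h12, Matrix.updateCol_self, Matrix.updateCol_self]
  have hswap : ∀ a b, D b a = - D a b := by
    intro a b
    have h := hzero (a + b)
    rw [hadd_l, hadd_r, hadd_r, hzero, hzero] at h
    linear_combination h
  have expand : ∀ a1 a2 a3 a4 b1 b2 b3 b4 : R,
      D (a1•A1 + a2•A2 + a3•g1 + a4•g2) (b1•A1 + b2•A2 + b3•g1 + b4•g2)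
      = (a1*b2 - a2*b1) * D A1 A2 + (a1*b3 - a3*b1) * D A1 g1
        + (a1*b4 - a4*b1) * D A1 g2 + (a2*b3 - a3*b2) * D A2 g1
        + (a2*b4 - a4*b2) * D A2 g2 + (a3*b4 - a4*b3) * D g1 g2 := by
    intro a1 a2 a3 a4 b1 b2 b3 b4
    simp only [hadd_l, hadd_r, hsmul_l, hsmul_r, hzero,
      hswap A1 A2, hswap A1 g1, hswap A1 g2, hswap A2 g1, hswap A2 g2, hswap g1 g2]
    ring
  have hRHS1 : (G.updateCol c1 A1).det = D A1 g2 := by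
    show _ = ((G.updateCol c1 A1).updateCol c2 g2).det
    have : g2 = fun r => (G.updateCol c1 A1) r c2 := by
      funext r; rw [hg2]; rw [Matrix.updateCol_ne (Ne.symm h12)]
    rw [this, Matrix.updateCol_eq_self]
  have hRHS2 : (G.updateCol c2 A2).det = D g1 A2 := by
    show _ = ((G.updateCol c1 g1).updateCol c2 A2).det
    rw [hg1, Matrix.updateCol_eq_self]
  have e1 : x^2•A1 + x•A2 - (x^2-1)•g1 - x•g2
      = x^2•A1 + x•A2 + (-(x^2-1))•g1 + (-x)•g2 := by module
  have e2 : x•A1 + A2 - x•g1 = x•A1 + (1:R)•A2 + (-x)•g1 + (0:R)•g2 := by module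
  have e3 : A1 + x•A2 - x•g2 = (1:R)•A1 + x•A2 + (0:R)•g1 + (-x)•g2 := by module
  have e4 : x•A1 + x^2•A2 - x•g1 - (x^2-1)•g2
      = x•A1 + x^2•A2 + (-x)•g1 + (-(x^2-1))•g2 := by module
  rw [hRHS1, hRHS2]
  show D _ _ - D _ _ = _
  rw [e1, e2, e3, e4, expand, expand]
  have hA1g2 : D A1 g2 = D ((1:R)•A1 + (0:R)•A2 + (0:R)•g1 + (0:R)•g2)
      ((0:R)•A1 + (0:R)•A2 + (0:R)•g1 + (1:R)•g2) := by
    congr 1 <;> module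
  have hg1A2 : D g1 A2 = D ((0:R)•A1 + (0:R)•A2 + (1:R)•g1 + (0:R)•g2)
      ((0:R)•A1 + (1:R)•A2 + (0:R)•g1 + (0:R)•g2) := by
    congr 1 <;> module
  rw [hA1g2, hg1A2, expand, expand]
  ring

end

section main
variable {R : Type*} [CommRing R]

lemma skein_matrix (m i : ℕ) (hm : 3 ≤ m) (hi1 : 1 ≤ i) (hi2 : i ≤ m - 1) (x : R)
    (M : Matrix (Fin m) (Fin m) R) :
    (M * (Vmat x x m i * Vmat x x m (i+1) * Vmat x x m i) - 1).det
      - (M * (Vmat x x m (i+1) * Vmat x x m i * Vmat x x m (i+1)) - 1).det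
    = (x^2-1) * ((M * Vmat x x m i - 1).det - (M * Vmat x x m (i+1) - 1).det) := by
  set c1 : Fin m := ⟨i-1, by omega⟩ with hc1
  set c2 : Fin m := ⟨i, by omega⟩ with hc2
  have hc : c1 ≠ c2 := by simp [hc1, hc2, Fin.ext_iff]; omega
  set v : Fin m → R := fun r =>
    if (r:ℕ)+1 = i then -1 else if (r:ℕ)+2 = i then x
    else if (r:ℕ) = i then x else 0 with hv
  set w : Fin m → R := fun r =>
    if (r:ℕ)+1 = i+1 then -1 else if (r:ℕ)+2 = i+1 then x
    else if (r:ℕ) = i+1 then x else 0 with hw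
  set e1 : Fin m → R := Pi.single c1 1 with he1
  set e2 : Fin m → R := Pi.single c2 1 with he2
  have hVi : Vmat x x m i = (1 : Matrix (Fin m) (Fin m) R).updateCol c1 v := by
    ext r c
    by_cases h : (c:ℕ)+1 = i
    · have hcc : c = c1 := by rw [hc1, Fin.ext_iff]; simp; omega
      subst hcc
      rw [Matrix.updateCol_self, hv]
      simp [Vmat, h]
    · have hcc : c ≠ c1 := by rw [hc1, Ne, Fin.ext_iff]; simp; omega
      rw [Matrix.updateCol_ne hcc]
      simp [Vmat, h, Matrix.one_apply]
  have hVj : Vmat x x m (i+1) = (1 : Matrix (Fin m) (Fin m) R).updateCol c2 w := by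
    ext r c
    by_cases h : (c:ℕ)+1 = i+1
    · have hcc : c = c2 := by rw [hc2, Fin.ext_iff]; simp; omega
      subst hcc
      rw [Matrix.updateCol_self, hw]
      simp [Vmat, h, hc2]
    · have hcc : c ≠ c2 := by rw [hc2, Ne, Fin.ext_iff]; simp; omega
      rw [Matrix.updateCol_ne hcc]
      simp only [Vmat, Matrix.of_apply]
      rw [if_neg h]
      simp [Matrix.one_apply]
  have hc1v : (c1:ℕ) = i - 1 := rfl
  have hc2v : (c2:ℕ) = i := rfl
  have hvc1 : v c1 = -1 := by
    simp only [hv, hc1v]; rw [if_pos (by omega)]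
  have hvc2 : v c2 = x := by
    simp only [hv, hc2v]; rw [if_neg (by omega), if_neg (by omega)]; simp
  have hwc1 : w c1 = x := by
    simp only [hw, hc1v]; rw [if_neg (by omega), if_pos (by omega)]
  have hwc2 : w c2 = -1 := by
    simp only [hw, hc2v]; simp
  have he1c2 : e1 c2 = 0 := by rw [he1, Pi.single_apply, if_neg (Ne.symm hc)]
  have he2c1 : e2 c1 = 0 := by rw [he2, Pi.single_apply, if_neg hc]
  -- column decompositions of the products
  have hViw : (Vmat x x m i).mulVec w = w + x • v - x • e1 := by
    rw [hVi, updateColumn_one_mulVec, hwc1, he1]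
  have hVjv : (Vmat x x m (i+1)).mulVec v = v + x • w - x • e2 := by
    rw [hVj, updateColumn_one_mulVec, hvc2, he2]
  have mulVi : ∀ A : Matrix (Fin m) (Fin m) R,
      A * Vmat x x m i = A.updateCol c1 (A.mulVec v) := by
    intro A; rw [hVi, mul_updateColumn', mul_one]
  have mulVj : ∀ A : Matrix (Fin m) (Fin m) R,
      A * Vmat x x m (i+1) = A.updateCol c2 (A.mulVec w) := by
    intro A; rw [hVj, mul_updateColumn', mul_one]
  have hP : Vmat x x m i * Vmat x x m (i+1) * Vmat x x m i
      = ((1 : Matrix (Fin m) (Fin m) R).updateCol c1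
          (x^2 • v + x • w - (x^2-1) • e1 - x • e2)).updateCol c2
          (w + x • v - x • e1) := by
    have h1 : (Vmat x x m i).mulVec ((Vmat x x m (i+1)).mulVec v)
        = x^2 • v + x • w - (x^2-1) • e1 - x • e2 := by
      rw [hVjv, hVi, updateColumn_one_mulVec]
      have hval : (v + x • w - x • e2) c1 = x^2 - 1 := by
        simp only [Pi.add_apply, Pi.sub_apply, Pi.smul_apply, smul_eq_mul,
          hvc1, hwc1, he2c1]
        ring
      rw [hval, ← he1]
      module
    have h2 : Vmat x x m i * Vmat x x m (i+1)
        = ((1 : Matrix (Fin m) (Fin m) R).updateCol c1 v).updateCol c2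
            (w + x • v - x • e1) := by
      rw [mulVj, hViw, hVi]
    rw [mulVi (Vmat x x m i * Vmat x x m (i+1)), ← Matrix.mulVec_mulVec, h1, h2,
      updateColumn_comm' _ (Ne.symm hc), updateColumn_idem']
  have hQ : Vmat x x m (i+1) * Vmat x x m i * Vmat x x m (i+1)
      = ((1 : Matrix (Fin m) (Fin m) R).updateCol c1
          (v + x • w - x • e2)).updateCol c2
          (x • v + x^2 • w - x • e1 - (x^2-1) • e2) := by
    have h1 : (Vmat x x m (i+1)).mulVec ((Vmat x x m i).mulVec w)
        = x • v + x^2 • w - x • e1 - (x^2-1) • e2 := by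
      rw [hViw, hVj, updateColumn_one_mulVec]
      have hval : (w + x • v - x • e1) c2 = x^2 - 1 := by
        simp only [Pi.add_apply, Pi.sub_apply, Pi.smul_apply, smul_eq_mul,
          hwc2, hvc2, he1c2]
        ring
      rw [hval, ← he2]
      module
    have h2 : Vmat x x m (i+1) * Vmat x x m i
        = ((1 : Matrix (Fin m) (Fin m) R).updateCol c2 w).updateCol c1
            (v + x • w - x • e2) := by
      rw [mulVi, hVjv, hVj]
    rw [mulVj (Vmat x x m (i+1) * Vmat x x m i), ← Matrix.mulVec_mulVec, h1, h2,
      updateColumn_comm' _ (Ne.symm hc), updateColumn_idem']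
  -- identification of the single columns of `1`
  have hone1 : (fun r => (1 : Matrix (Fin m) (Fin m) R) r c1) = e1 := by
    funext r; rw [he1, Matrix.one_apply, Pi.single_apply]
  have hone2 : (fun r => (1 : Matrix (Fin m) (Fin m) R) r c2) = e2 := by
    funext r; rw [he2, Matrix.one_apply, Pi.single_apply]
  have hMe1 : M.mulVec e1 = fun r => M r c1 := by
    rw [he1, Matrix.mulVec_single]; simp; rfl
  have hMe2 : M.mulVec e2 = fun r => M r c2 := by
    rw [he2, Matrix.mulVec_single]; simp; rfl
  set A1 : Fin m → R := M.mulVec v - e1 with hA1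
  set A2 : Fin m → R := M.mulVec w - e2 with hA2
  set g1 : Fin m → R := M.mulVec e1 - e1 with hg1
  set g2 : Fin m → R := M.mulVec e2 - e2 with hg2
  have hg1col : g1 = fun r => (M - 1) r c1 := by
    funext r
    have h := congrFun hone1 r
    simp only [hg1, Pi.sub_apply, Matrix.sub_apply, hMe1]
    rw [← h]
  have hg2col : g2 = fun r => (M - 1) r c2 := by
    funext r
    have h := congrFun hone2 r
    simp only [hg2, Pi.sub_apply, Matrix.sub_apply, hMe2]
    rw [← h]
  have hMVi : M * Vmat x x m i - 1 = (M - 1).updateCol c1 A1 := by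
    rw [mulVi, updateColumn_sub, hone1, hA1]
  have hMVj : M * Vmat x x m (i+1) - 1 = (M - 1).updateCol c2 A2 := by
    rw [mulVj, updateColumn_sub, hone2, hA2]
  have hMP : M * (Vmat x x m i * Vmat x x m (i+1) * Vmat x x m i) - 1
      = ((M - 1).updateCol c1
          (M.mulVec (x^2 • v + x • w - (x^2-1) • e1 - x • e2) - e1)).updateCol c2
          (M.mulVec (w + x • v - x • e1) - e2) := by
    rw [hP, mul_updateColumn', mul_updateColumn', mul_one, updateColumn_sub,
      updateColumn_sub, hone1, hone2]
  have hMQ : M * (Vmat x x m (i+1) * Vmat x x m i * Vmat x x m (i+1)) - 1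
      = ((M - 1).updateCol c1
          (M.mulVec (v + x • w - x • e2) - e1)).updateCol c2
          (M.mulVec (x • v + x^2 • w - x • e1 - (x^2-1) • e2) - e2) := by
    rw [hQ, mul_updateColumn', mul_updateColumn', mul_one, updateColumn_sub,
      updateColumn_sub, hone1, hone2]
  have comb1 : M.mulVec (x^2 • v + x • w - (x^2-1) • e1 - x • e2) - e1
      = x^2 • A1 + x • A2 - (x^2-1) • g1 - x • g2 := by
    simp only [hA1, hA2, hg1, hg2, Matrix.mulVec_add, Matrix.mulVec_sub,
      Matrix.mulVec_smul]
    module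
  have comb2 : M.mulVec (w + x • v - x • e1) - e2 = x • A1 + A2 - x • g1 := by
    simp only [hA1, hA2, hg1, Matrix.mulVec_add, Matrix.mulVec_sub,
      Matrix.mulVec_smul]
    module
  have comb3 : M.mulVec (v + x • w - x • e2) - e1 = A1 + x • A2 - x • g2 := by
    simp only [hA1, hA2, hg2, Matrix.mulVec_add, Matrix.mulVec_sub,
      Matrix.mulVec_smul]
    module
  have comb4 : M.mulVec (x • v + x^2 • w - x • e1 - (x^2-1) • e2) - e2
      = x • A1 + x^2 • A2 - x • g1 - (x^2-1) • g2 := by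
    simp only [hA1, hA2, hg1, hg2, Matrix.mulVec_add, Matrix.mulVec_sub,
      Matrix.mulVec_smul]
    module
  rw [hMP, hMQ, hMVi, hMVj, comb1, comb2, comb3, comb4]
  exact det_skein (M - 1) hc x A1 A2 g1 g2 hg1col hg2col
end main

/-- Proposition 4.11 (skein relation): for `n ≥ 4` (`n = m+1`), `β ∈ T_n` and
`1 ≤ i ≤ n−2`,
`f_n(β t_i t_{i+1} t_i) − f_n(β t_{i+1} t_i t_{i+1}) = (x²−1)(f_n(β t_i) − f_n(β t_{i+1}))`. -/
theorem stmt17 (m : ℕ) (hm : 3 ≤ m) (i : ℕ) (hi1 : 1 ≤ i) (hi2 : i ≤ m - 1)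
    (ψ : TwinGroup m →* Matrix (Fin m) (Fin m) Zx)
    (hψ : ∀ k : Fin m, ψ (TwinGroup.of k) = Vmat xx xx m ((k : ℕ) + 1))
    (β : TwinGroup m) :
    Matrix.det (ψ (β * TwinGroup.of (⟨i - 1, by omega⟩ : Fin m)
          * TwinGroup.of (⟨i, by omega⟩ : Fin m)
          * TwinGroup.of (⟨i - 1, by omega⟩ : Fin m)) - 1) / ((-xx)^m * Ux m)
      - Matrix.det (ψ (β * TwinGroup.of (⟨i, by omega⟩ : Fin m)
          * TwinGroup.of (⟨i - 1, by omega⟩ : Fin m)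
          * TwinGroup.of (⟨i, by omega⟩ : Fin m)) - 1) / ((-xx)^m * Ux m)
    = (xx^2 - 1) *
      (Matrix.det (ψ (β * TwinGroup.of (⟨i - 1, by omega⟩ : Fin m)) - 1) / ((-xx)^m * Ux m)
        - Matrix.det (ψ (β * TwinGroup.of (⟨i, by omega⟩ : Fin m)) - 1) / ((-xx)^m * Ux m)) := by
  have key := skein_matrix (R := Zx) m i hm hi1 hi2 xx (ψ β)
  simp only [_root_.map_mul, hψ] at *
  have harith : ((⟨i - 1, by omega⟩ : Fin m) : ℕ) + 1 = i := by
    simp only [Fin.val_mk]; omega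
  rw [harith]
  have h2 : ((⟨i, by omega⟩ : Fin m) : ℕ) + 1 = i + 1 := rfl
  rw [h2]
  simp only [mul_assoc] at key ⊢
  rw [div_sub_div_same, div_sub_div_same, key, mul_div_assoc]
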